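/- Let a, b, c, d, p, q, r, s be integers satisfying a·p + b·q = 1 + a·b and c·r + d·s = 1 + c·d. Set u = a·c + b·d, v = a·d − b·c, z₁ = a·(a − q) + b·p, z₂ = c·s + d·(d − r), z₃ = c·(c − s) + d·r. Then the following four identities hold: (a² + b²)·(c·(a − q) + d·p) = v + u·z₁; (c² + d²)·(a·s + b·(d − r)) = v + u·z₂; (a² + b²)·(c·p − d·(a − q)) = u − v·z₁; and (c² + d²)·(a·r − b·(c − s)) = u + v·z₃. -/
import Mathlib


theorem sum_of_squares_identities
    (a b c d p q r s : ℤ)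
    (hab : a * p + b * q = 1 + a * b)
    (hcd : c * r + d * s = 1 + c * d) :
    (a ^ 2 + b ^ 2) * (c * (a - q) + d * p) =
      (a * d - b * c) + (a * c + b * d) * (a * (a - q) + b * p) ∧
    (c ^ 2 + d ^ 2) * (a * s + b * (d - r)) =
      (a * d - b * c) + (a * c + b * d) * (c * s + d * (d - r)) ∧
    (a ^ 2 + b ^ 2) * (c * p - d * (a - q)) =
      (a * c + b * d) - (a * d - b * c) * (a * (a - q) + b * p) ∧
    (c ^ 2 + d ^ 2) * (a * r - b * (c - s)) =
      (a * c + b * d) + (a * d - b * c) * (c * (c - s) + d * r) := by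
  refine ⟨by linear_combination (a*d - b*c) * hab, by linear_combination (a*d - b*c) * hcd, by linear_combination (a*c + b*d) * hab, by linear_combination (a*c + b*d) * hcd⟩
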